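/- Assume that for every t < T one has S_t − m(S_{t+1}|𝓕_t) > 0 P-a.s. and M(S_{t+1}|𝓕_t) − S_t > 0 P-a.s. Then the market satisfies NA (no arbitrage) if and only if it satisfies AIP, where NA means: for every t < T and every terminal portfolio value v = Σ_{u=t}^{T−1} θ_u·(S_{u+1} − S_u) with each θ_u 𝓕_u-measurable and essentially bounded, if v ≥ 0 P-a.s. then v = 0 P-a.s. -/

import Mathlib

open MeasureTheory Filter

/-- A real random variable is essentially bounded w.r.t. the measure `P`. -/
def EssBdd {Ω : Type*} {F : MeasurableSpace Ω} (P : @Measure Ω F) (X : Ω → ℝ) : Prop :=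
  ∃ C : ℝ, ∀ᵐ ω ∂P, |X ω| ≤ C

/-- `Y` is the conditional essential supremum `M(X|H)` of `X` given the sub-σ-algebra `H`:
`Y` is `H`-measurable, essentially bounded, `X ≤ Y` a.s., and `Y` is a.s. below every
`H`-measurable `Z` with `X ≤ Z` a.s. -/
def IsCondEssSup {Ω : Type*} {F : MeasurableSpace Ω} (P : @Measure Ω F)
    (H : MeasurableSpace Ω) (X Y : Ω → ℝ) : Prop :=
  Measurable[H] Y ∧ EssBdd P Y ∧ (∀ᵐ ω ∂P, X ω ≤ Y ω) ∧
    ∀ Z : Ω → ℝ, Measurable[H] Z → (∀ᵐ ω ∂P, X ω ≤ Z ω) → ∀ᵐ ω ∂P, Y ω ≤ Z ω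

/-- `Y` is the conditional essential infimum `m(X|H) = -M(-X|H)`. -/
def IsCondEssInf {Ω : Type*} {F : MeasurableSpace Ω} (P : @Measure Ω F)
    (H : MeasurableSpace Ω) (X Y : Ω → ℝ) : Prop :=
  IsCondEssSup P H (fun ω => -X ω) (fun ω => -Y ω)

/-- The terminal value `∑_{u=t}^{T-1} θ_u (S_{u+1} − S_u)` of the elementary portfolio `θ`
starting at time `t` with zero initial capital. -/
def PortfolioValue (Ω : Type*) (S θ : ℕ → Ω → ℝ) (t T : ℕ) : Ω → ℝ :=
  fun ω => ∑ u ∈ Finset.Ico t T, θ u ω * (S (u + 1) ω - S u ω)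

/-- A trading strategy is admissible if at each time `u` it is `𝓕ᵤ`-measurable and
essentially bounded. -/
def IsStrategy {Ω : Type*} {F : MeasurableSpace Ω} (P : @Measure Ω F)
    (𝓕 : ℕ → MeasurableSpace Ω) (θ : ℕ → Ω → ℝ) : Prop :=
  ∀ u, Measurable[𝓕 u] (θ u) ∧ EssBdd P (θ u)

/-- Absence of Immediate Profit: for every `t < T` and every admissible strategy, the
conditional essential infimum at time `t` of the associated terminal portfolio value is
nonpositive a.s. -/
def AIP {Ω : Type*} {F : MeasurableSpace Ω} (P : @Measure Ω F)
    (𝓕 : ℕ → MeasurableSpace Ω) (S : ℕ → Ω → ℝ) (T : ℕ) : Prop :=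
  ∀ t, t < T → ∀ θ : ℕ → Ω → ℝ, IsStrategy P 𝓕 θ →
    ∀ mv : Ω → ℝ, IsCondEssInf P (𝓕 t) (PortfolioValue Ω S θ t T) mv →
      ∀ᵐ ω ∂P, mv ω ≤ 0

/-- No Arbitrage: every nonnegative terminal portfolio value obtained from zero initial
capital vanishes a.s. -/
def NA {Ω : Type*} {F : MeasurableSpace Ω} (P : @Measure Ω F)
    (𝓕 : ℕ → MeasurableSpace Ω) (S : ℕ → Ω → ℝ) (T : ℕ) : Prop :=
  ∀ t, t < T → ∀ θ : ℕ → Ω → ℝ, IsStrategy P 𝓕 θ →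
    (∀ᵐ ω ∂P, 0 ≤ PortfolioValue Ω S θ t T ω) →
      PortfolioValue Ω S θ t T =ᵐ[P] fun _ => (0 : ℝ)

lemma exists_condEssSup {Ω : Type*} {F : MeasurableSpace Ω} (P : Measure Ω)
    [IsProbabilityMeasure P] (H : MeasurableSpace Ω) (hH : H ≤ F)
    (X : Ω → ℝ) (hX : EssBdd P X) : ∃ Y, IsCondEssSup P H X Y := by
  classical
  obtain ⟨C₀, hC₀⟩ := hX
  set C : ℝ := |C₀| with hCdef
  have hC : ∀ᵐ ω ∂P, |X ω| ≤ C := hC₀.mono fun ω h => h.trans (le_abs_self _)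
  set 𝒮 : Set (Ω → ℝ) :=
    {Z | Measurable[H] Z ∧ (∀ᵐ ω ∂P, X ω ≤ Z ω) ∧ ∀ ω, |Z ω| ≤ C} with h𝒮def
  have hCmem : (fun _ => C) ∈ 𝒮 := by
    refine ⟨measurable_const, hC.mono fun ω h => ?_, fun ω => by simp [hCdef]⟩
    exact (le_abs_self _).trans h
  have hint : ∀ Z ∈ 𝒮, Integrable Z P := by
    intro Z hZ
    refine Integrable.mono' (integrable_const C) ((hZ.1.mono hH le_rfl).aestronglyMeasurable)
      (ae_of_all _ fun ω => by simpa [Real.norm_eq_abs] using hZ.2.2 ω)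
  have hlb : ∀ Z ∈ 𝒮, -C ≤ ∫ ω, Z ω ∂P := by
    intro Z hZ
    have := integral_mono (integrable_const (-C)) (hint Z hZ)
      (fun ω => (abs_le.mp (hZ.2.2 ω)).1)
    simpa using this
  set I : Set ℝ := (fun Z => ∫ ω, Z ω ∂P) '' 𝒮 with hIdef
  have hIne : I.Nonempty := ⟨_, ⟨_, hCmem, rfl⟩⟩
  have hIbdd : BddBelow I := ⟨-C, by rintro x ⟨Z, hZ, rfl⟩; exact hlb Z hZ⟩
  set s : ℝ := sInf I with hsdef
  have hseq : ∀ n : ℕ, ∃ Z ∈ 𝒮, ∫ ω, Z ω ∂P < s + 1 / (n + 1) := by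
    intro n
    have hlt : s < s + 1 / (n + 1 : ℝ) := lt_add_of_pos_right _ (by positivity)
    obtain ⟨x, hxI, hx⟩ := exists_lt_of_csInf_lt hIne hlt
    obtain ⟨Z, hZ, rfl⟩ := hxI
    exact ⟨Z, hZ, hx⟩
  choose Z hZ𝒮 hZint using hseq
  have hmin𝒮 : ∀ Z₁ ∈ 𝒮, ∀ Z₂ ∈ 𝒮, (fun ω => min (Z₁ ω) (Z₂ ω)) ∈ 𝒮 := by
    rintro Z₁ ⟨h1m, h1ae, h1b⟩ Z₂ ⟨h2m, h2ae, h2b⟩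
    refine ⟨h1m.min h2m, (h1ae.and h2ae).mono fun ω ⟨a, b⟩ => le_min a b, fun ω => ?_⟩
    show |min (Z₁ ω) (Z₂ ω)| ≤ C
    exact abs_le.mpr ⟨le_min (abs_le.mp (h1b ω)).1 (abs_le.mp (h2b ω)).1,
      (min_le_left _ _).trans (abs_le.mp (h1b ω)).2⟩
  set W : ℕ → Ω → ℝ := fun n =>
    Nat.rec (Z 0) (fun k Wk ω => min (Wk ω) (Z (k + 1) ω)) n with hWdef
  have hWsucc : ∀ n ω, W (n + 1) ω = min (W n ω) (Z (n + 1) ω) := fun n ω => rfl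
  have hW𝒮 : ∀ n, W n ∈ 𝒮 := by
    intro n; induction n with
    | zero => exact hZ𝒮 0
    | succ k ih => exact hmin𝒮 _ ih _ (hZ𝒮 (k + 1))
  have hWanti : ∀ n ω, W (n + 1) ω ≤ W n ω := fun n ω => min_le_left _ _
  have hWZ : ∀ n ω, W n ω ≤ Z n ω := by
    intro n ω; cases n with
    | zero => exact le_rfl
    | succ k => exact min_le_right _ _
  set Y : Ω → ℝ := fun ω => ⨅ n, W n ω with hYdef
  have hbdd : ∀ ω, BddBelow (Set.range fun n => W n ω) := by
    intro ω
    exact ⟨-C, by rintro x ⟨n, rfl⟩; exact (abs_le.mp ((hW𝒮 n).2.2 ω)).1⟩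
  have hYleW : ∀ n ω, Y ω ≤ W n ω := fun n ω => ciInf_le (hbdd ω) n
  have hYlb : ∀ ω, -C ≤ Y ω := fun ω => le_ciInf fun n => (abs_le.mp ((hW𝒮 n).2.2 ω)).1
  have hYb : ∀ ω, |Y ω| ≤ C := fun ω =>
    abs_le.mpr ⟨hYlb ω, (hYleW 0 ω).trans (abs_le.mp ((hW𝒮 0).2.2 ω)).2⟩
  have htend : ∀ ω, Tendsto (fun n => W n ω) atTop (nhds (Y ω)) := fun ω =>
    tendsto_atTop_ciInf (antitone_nat_of_succ_le fun n => hWanti n ω) (hbdd ω)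
  have hYm : Measurable[H] Y := by
    refine measurable_of_tendsto_metrizable' (f := fun n => W n) atTop
      (fun n => (hW𝒮 n).1) ?_
    rw [tendsto_pi_nhds]; exact htend
  have hXY : ∀ᵐ ω ∂P, X ω ≤ Y ω :=
    (ae_all_iff.mpr fun n => (hW𝒮 n).2.1).mono fun ω h => le_ciInf fun n => h n
  have hY𝒮 : Y ∈ 𝒮 := ⟨hYm, hXY, hYb⟩
  have hYs : ∫ ω, Y ω ∂P ≤ s := by
    by_contra hcon
    push_neg at hcon
    obtain ⟨n, hn⟩ := exists_nat_one_div_lt (sub_pos.mpr hcon)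
    have h1 : ∫ ω, Y ω ∂P ≤ ∫ ω, W n ω ∂P :=
      integral_mono (hint Y hY𝒮) (hint _ (hW𝒮 n)) fun ω => hYleW n ω
    have h2 : ∫ ω, W n ω ∂P ≤ ∫ ω, Z n ω ∂P :=
      integral_mono (hint _ (hW𝒮 n)) (hint _ (hZ𝒮 n)) fun ω => hWZ n ω
    have h3 := hZint n
    linarith
  have hsY : s ≤ ∫ ω, Y ω ∂P := csInf_le hIbdd ⟨Y, hY𝒮, rfl⟩
  refine ⟨Y, hYm, ⟨C, ae_of_all _ hYb⟩, hXY, ?_⟩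
  intro Z₀ hZ₀m hZ₀ae
  set W₀ : Ω → ℝ := fun ω => min (Y ω) (max (Z₀ ω) (-C)) with hW₀def
  have hW₀𝒮 : W₀ ∈ 𝒮 := by
    refine ⟨hYm.min (hZ₀m.max measurable_const), ?_, fun ω => ?_⟩
    · exact (hXY.and hZ₀ae).mono fun ω ⟨h1, h2⟩ =>
        le_min h1 (h2.trans (le_max_left _ _))
    · refine abs_le.mpr ⟨le_min (hYlb ω) (le_max_right _ _), ?_⟩
      exact (min_le_left _ _).trans (abs_le.mp (hYb ω)).2
  have hW₀leY : ∀ ω, W₀ ω ≤ Y ω := fun ω => min_le_left _ _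
  have h1 : ∫ ω, W₀ ω ∂P ≤ ∫ ω, Y ω ∂P :=
    integral_mono (hint _ hW₀𝒮) (hint _ hY𝒮) hW₀leY
  have h2 : s ≤ ∫ ω, W₀ ω ∂P := csInf_le hIbdd ⟨W₀, hW₀𝒮, rfl⟩
  have hzero : ∫ ω, (Y ω - W₀ ω) ∂P = 0 := by
    rw [integral_sub (hint _ hY𝒮) (hint _ hW₀𝒮)]; linarith
  have hae : (fun ω => Y ω - W₀ ω) =ᵐ[P] 0 := by
    rw [← integral_eq_zero_iff_of_nonneg (fun ω => sub_nonneg.mpr (hW₀leY ω))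
      ((hint _ hY𝒮).sub (hint _ hW₀𝒮))]
    exact hzero
  refine (hae.and (hZ₀ae.and hC)).mono fun ω ⟨h1', h2', h3'⟩ => ?_
  have hYW : Y ω = W₀ ω := by
    have : Y ω - W₀ ω = 0 := h1'
    linarith
  have hZC : -C ≤ Z₀ ω := le_trans (abs_le.mp h3').1 h2'
  have : Y ω ≤ max (Z₀ ω) (-C) := hYW.le.trans (min_le_right _ _)
  rwa [max_eq_left hZC] at this

lemma exists_condEssInf {Ω : Type*} {F : MeasurableSpace Ω} (P : Measure Ω)
    [IsProbabilityMeasure P] (H : MeasurableSpace Ω) (hH : H ≤ F)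
    (X : Ω → ℝ) (hX : EssBdd P X) : ∃ Y, IsCondEssInf P H X Y := by
  obtain ⟨C, hC⟩ := hX
  obtain ⟨Y', hY'⟩ := exists_condEssSup P H hH (fun ω => -X ω)
    ⟨C, hC.mono fun ω h => by simpa [abs_neg] using h⟩
  refine ⟨fun ω => -Y' ω, ?_⟩
  unfold IsCondEssInf
  have h : (fun ω => -(-Y' ω)) = Y' := funext fun ω => neg_neg _
  rw [h]
  exact hY'

lemma na_of_strict {Ω : Type*} {F : MeasurableSpace Ω} (P : Measure Ω)
    [IsProbabilityMeasure P]
    (𝓕 : ℕ → MeasurableSpace Ω) (h𝓕mono : Monotone 𝓕) (h𝓕le : ∀ t, 𝓕 t ≤ F)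
    (S : ℕ → Ω → ℝ) (hSmeas : ∀ t, Measurable[𝓕 t] (S t))
    (hSbdd : ∀ t, EssBdd P (S t)) :
    ∀ T : ℕ, (∀ t, t < T → ∀ mS MS : Ω → ℝ,
      IsCondEssInf P (𝓕 t) (S (t + 1)) mS → IsCondEssSup P (𝓕 t) (S (t + 1)) MS →
      ∀ᵐ ω ∂P, 0 < S t ω - mS ω ∧ 0 < MS ω - S t ω) → NA P 𝓕 S T := by
  intro T
  induction T with
  | zero => intro _ t ht; omega
  | succ T ih =>
    intro hstrict t ht θ hθ hv
    have htT : t ≤ T := by omega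
    obtain ⟨MS, hMS⟩ := exists_condEssSup P (𝓕 T) (h𝓕le T) (S (T + 1)) (hSbdd (T + 1))
    obtain ⟨mS, hmS⟩ := exists_condEssInf P (𝓕 T) (h𝓕le T) (S (T + 1)) (hSbdd (T + 1))
    have hpos := hstrict T (by omega) mS MS hmS hMS
    set v' : Ω → ℝ := PortfolioValue Ω S θ t T with hv'def
    have hsplit : ∀ ω, PortfolioValue Ω S θ t (T + 1) ω
        = v' ω + θ T ω * (S (T + 1) ω - S T ω) := by
      intro ω
      simp only [hv'def, PortfolioValue]
      rw [Finset.sum_Ico_succ_top htT]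
    have hv'meas : Measurable[𝓕 T] v' := by
      apply Finset.measurable_sum
      intro u hu
      have hu' : u < T := (Finset.mem_Ico.mp hu).2
      exact ((hθ u).1.mono (h𝓕mono hu'.le) le_rfl).mul
        (((hSmeas (u + 1)).mono (h𝓕mono hu') le_rfl).sub
          ((hSmeas u).mono (h𝓕mono hu'.le) le_rfl))
    obtain ⟨C₁, hC₁⟩ := hSbdd (T + 1)
    have hθTmeas : Measurable[𝓕 T] (θ T) := (hθ T).1
    -- Claim A
    have hZmeas : Measurable[𝓕 T]
        (fun ω => if 0 < θ T ω then v' ω / θ T ω - S T ω else C₁) := by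
      exact Measurable.ite (measurableSet_lt measurable_const hθTmeas)
        ((hv'meas.div hθTmeas).sub (hSmeas T)) measurable_const
    have hZae : ∀ᵐ ω ∂P, -S (T + 1) ω ≤
        (fun ω => if 0 < θ T ω then v' ω / θ T ω - S T ω else C₁) ω := by
      refine (hv.and hC₁).mono fun ω ⟨h0, hb⟩ => ?_
      rw [hsplit ω] at h0
      by_cases hp : 0 < θ T ω
      · simp only [if_pos hp]
        have h1 : (S T ω - S (T + 1) ω) * θ T ω ≤ v' ω := by nlinarith
        have h2 := (le_div_iff₀ hp).mpr h1
        linarith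
      · simp only [if_neg hp]
        linarith [(abs_le.mp hb).1]
    have claimA : ∀ᵐ ω ∂P, 0 < θ T ω → θ T ω * (S T ω - mS ω) ≤ v' ω := by
      refine (hmS.2.2.2 _ hZmeas hZae).mono fun ω h hp => ?_
      rw [if_pos hp] at h
      have h2 : S T ω - mS ω ≤ v' ω / θ T ω := by linarith
      rw [le_div_iff₀ hp] at h2
      nlinarith
    -- Claim B
    have hZ'meas : Measurable[𝓕 T]
        (fun ω => if θ T ω < 0 then S T ω - v' ω / θ T ω else C₁) := by
      exact Measurable.ite (measurableSet_lt hθTmeas measurable_const)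
        ((hSmeas T).sub (hv'meas.div hθTmeas)) measurable_const
    have hZ'ae : ∀ᵐ ω ∂P, S (T + 1) ω ≤
        (fun ω => if θ T ω < 0 then S T ω - v' ω / θ T ω else C₁) ω := by
      refine (hv.and hC₁).mono fun ω ⟨h0, hb⟩ => ?_
      rw [hsplit ω] at h0
      by_cases hn : θ T ω < 0
      · simp only [if_pos hn]
        have h1 : (S T ω - S (T + 1) ω) * θ T ω ≤ v' ω := by nlinarith
        have h2 := (div_le_iff_of_neg hn).mpr h1
        linarith
      · simp only [if_neg hn]
        linarith [(abs_le.mp hb).2]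
    have claimB : ∀ᵐ ω ∂P, θ T ω < 0 → (-θ T ω) * (MS ω - S T ω) ≤ v' ω := by
      refine (hMS.2.2.2 _ hZ'meas hZ'ae).mono fun ω h hn => ?_
      rw [if_pos hn] at h
      have h2 : v' ω / θ T ω ≤ S T ω - MS ω := by linarith
      rw [div_le_iff_of_neg hn] at h2
      nlinarith
    have hv'nonneg : ∀ᵐ ω ∂P, 0 ≤ v' ω := by
      refine ((claimA.and claimB).and (hv.and hpos)).mono
        fun ω ⟨⟨hA, hB⟩, h0, hp1, hp2⟩ => ?_
      rcases lt_trichotomy (θ T ω) 0 with h | h | h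
      · nlinarith [hB h]
      · rw [hsplit ω] at h0; rw [h] at h0; linarith
      · nlinarith [hA h]
    have hv'zero : ∀ᵐ ω ∂P, v' ω = 0 := by
      rcases eq_or_lt_of_le htT with heq | hlt
      · refine ae_of_all _ fun ω => ?_
        simp [hv'def, PortfolioValue, heq]
      · have hstrict' : ∀ u, u < T → ∀ mS MS : Ω → ℝ,
            IsCondEssInf P (𝓕 u) (S (u + 1)) mS → IsCondEssSup P (𝓕 u) (S (u + 1)) MS →
            ∀ᵐ ω ∂P, 0 < S u ω - mS ω ∧ 0 < MS ω - S u ω :=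
          fun u hu => hstrict u (by omega)
        exact ih hstrict' t hlt θ hθ hv'nonneg
    refine ((claimA.and claimB).and (hv'zero.and hpos)).mono
      fun ω ⟨⟨hA, hB⟩, hz, hp1, hp2⟩ => ?_
    have hθ0 : θ T ω = 0 := by
      rcases lt_trichotomy (θ T ω) 0 with h | h | h
      · nlinarith [hB h]
      · exact h
      · nlinarith [hA h]
    show PortfolioValue Ω S θ t (T + 1) ω = 0
    rw [hsplit ω, hθ0, hz]
    ring


/-- If the price process lies a.s. strictly between its conditional essential infimum and
supremum at every step, then no arbitrage (NA) is equivalent to absence of immediate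
profit (AIP). -/
theorem na_iff_aip {Ω : Type*} [F : MeasurableSpace Ω]
    (P : Measure Ω) [IsProbabilityMeasure P] (T : ℕ)
    (𝓕 : ℕ → MeasurableSpace Ω) (h𝓕mono : Monotone 𝓕) (h𝓕le : ∀ t, 𝓕 t ≤ F)
    (S : ℕ → Ω → ℝ) (hSmeas : ∀ t, Measurable[𝓕 t] (S t))
    (hSbdd : ∀ t, EssBdd P (S t)) (hSnonneg : ∀ t, ∀ᵐ ω ∂P, 0 ≤ S t ω)
    (hstrict : ∀ t, t < T → ∀ mS MS : Ω → ℝ,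
      IsCondEssInf P (𝓕 t) (S (t + 1)) mS → IsCondEssSup P (𝓕 t) (S (t + 1)) MS →
      ∀ᵐ ω ∂P, 0 < S t ω - mS ω ∧ 0 < MS ω - S t ω) :
    NA P 𝓕 S T ↔ AIP P 𝓕 S T := by
  constructor
  · intro hNA t ht θ hθ mv hmv
    by_contra hcon
    rw [ae_iff] at hcon
    set A : Set Ω := {ω | 0 < mv ω} with hAdef
    have hAeq : {ω | ¬ mv ω ≤ 0} = A := by ext ω; simp [hAdef, not_le]
    have hmvmeas : Measurable[𝓕 t] mv := by
      have := hmv.1.neg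
      convert this using 1
      funext ω; simp
    have hAm : MeasurableSet[𝓕 t] A := measurableSet_lt measurable_const hmvmeas
    set θ' : ℕ → Ω → ℝ :=
      fun u ω => if t ≤ u then θ u ω * A.indicator (fun _ => 1) ω else 0 with hθ'def
    have hθ'strat : IsStrategy P 𝓕 θ' := by
      intro u
      constructor
      · by_cases h : t ≤ u
        · simp only [hθ'def, if_pos h]
          exact (hθ u).1.mul (measurable_const.indicator (h𝓕mono h _ hAm))
        · simp only [hθ'def, if_neg h]
          exact measurable_const
      · obtain ⟨c, hc⟩ := (hθ u).2
        refine ⟨max c 0, hc.mono fun ω h => ?_⟩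
        by_cases htu : t ≤ u
        · simp only [hθ'def, if_pos htu, abs_mul]
          have hind : |A.indicator (fun _ => (1:ℝ)) ω| ≤ 1 := by
            by_cases hω : ω ∈ A <;> simp [Set.indicator, hω]
          nlinarith [abs_nonneg (θ u ω), abs_nonneg (A.indicator (fun _ => (1:ℝ)) ω),
            le_max_left c (0:ℝ)]
        · simp only [hθ'def, if_neg htu, abs_zero]
          exact le_max_right _ _
    have hPV : ∀ ω, PortfolioValue Ω S θ' t T ω
        = A.indicator (fun _ => 1) ω * PortfolioValue Ω S θ t T ω := by
      intro ω
      simp only [PortfolioValue]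
      rw [Finset.mul_sum]
      refine Finset.sum_congr rfl fun u hu => ?_
      have htu : t ≤ u := (Finset.mem_Ico.mp hu).1
      simp only [hθ'def, if_pos htu]
      ring
    have hmvle : ∀ᵐ ω ∂P, mv ω ≤ PortfolioValue Ω S θ t T ω :=
      hmv.2.2.1.mono fun ω h => by simpa using neg_le_neg_iff.mp h
    have hnn : ∀ᵐ ω ∂P, 0 ≤ PortfolioValue Ω S θ' t T ω := by
      refine hmvle.mono fun ω h => ?_
      rw [hPV ω]
      by_cases hω : ω ∈ A
      · have h0 : 0 < mv ω := hω
        simp only [Set.indicator_of_mem hω, one_mul]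
        linarith
      · simp [Set.indicator_of_notMem hω]
    have hzero := hNA t ht θ' hθ'strat hnn
    have hnotA : ∀ᵐ ω ∂P, ω ∉ A := by
      refine (hzero.and hmvle).mono fun ω ⟨hz, hle⟩ hω => ?_
      have h0 : 0 < mv ω := hω
      have : PortfolioValue Ω S θ' t T ω = 0 := hz
      rw [hPV ω, Set.indicator_of_mem hω, one_mul] at this
      linarith
    have hPA : P A = 0 := by
      rw [ae_iff] at hnotA
      convert hnotA using 2
      ext ω
      simp
    exact hcon (hAeq ▸ hPA)
  · intro _
    exact na_of_strict P 𝓕 h𝓕mono h𝓕le S hSmeas hSbdd T hstrict
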